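/- Let f : ℝ → ℝ be continuously differentiable and 2π-periodic, let M ≥ 0 satisfy |f′(x)| ≤ M for all x, and let x_0 ∈ ℝ satisfy f(x_0) = 0 and f(−x_0) = 0 (e.g. x_0 = 0 or x_0 = π). Let N ≥ 3, Ω ∈ ℝ, ω : Fin N → ℝ, and let φ^C : Fin (N−1) → ℝ satisfy the standard-coupling chain equations: Ω = ω_1 + f(−φ^C_1), Ω = ω_k + f(φ^C_{k−1}) + f(−φ^C_k) for 1 < k < N, and Ω = ω_N + f(φ^C_{N−1}). Let S = ∑_{j=1}^{N−1} φ^C_j, let Ψ = S − 2π·⌊S/(2π)⌋, and define φ^R_k = φ^C_k − (x_0 + Ψ)/(N−1) and ε = M·|x_0 + Ψ|/(N−1). Then |ω_1 + f(−φ^R_1) + f(−∑_{j=1}^{N−1} φ^R_j) − Ω| ≤ ε, |ω_k + f(φ^R_{k−1}) + f(−φ^R_k) − Ω| ≤ 2ε for all 1 < k < N, and |ω_N + f(φ^R_{N−1}) + f(∑_{j=1}^{N−1} φ^R_j) − Ω| ≤ ε. In particular, a locked chain state under standard coupling yields an approximate locked ring state whose residuals are O(1/N). -/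

import Mathlib

/-- From a chain locked state under *standard* coupling, with `x_0` a zero
of `f` satisfying also `f(-x_0) = 0`, the shifted phases `φ^R_k = φ^C_k - (x_0 + Ψ)/(N-1)`
give an approximate ring locked state whose residuals are `O(1/N)`.
(Indices are 0-based: oscillator `k` of the paper is index `k-1`.) -/
theorem chain_gives_approximate_ring_standard (f : ℝ → ℝ) (hf : ContDiff ℝ 1 f)
    (hper : Function.Periodic f (2 * Real.pi))
    (M : ℝ) (hM : 0 ≤ M) (hM' : ∀ x, |deriv f x| ≤ M)
    (x0 : ℝ) (hx0 : f x0 = 0) (hx0' : f (-x0) = 0)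
    (N : ℕ) (hN : 3 ≤ N) (Ω : ℝ) (ω : Fin N → ℝ) (φC : Fin (N - 1) → ℝ)
    (hfirst : Ω = ω ⟨0, by omega⟩ + f (-φC ⟨0, by omega⟩))
    (hmid : ∀ k : ℕ, (h1 : 1 ≤ k) → (h2 : k ≤ N - 2) →
      Ω = ω ⟨k, by omega⟩ + f (φC ⟨k - 1, by omega⟩) + f (-φC ⟨k, by omega⟩))
    (hlast : Ω = ω ⟨N - 1, by omega⟩ + f (φC ⟨N - 2, by omega⟩))
    (S Ψ : ℝ) (hS : S = ∑ j, φC j)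
    (hΨ : Ψ = S - 2 * Real.pi * (⌊S / (2 * Real.pi)⌋ : ℤ))
    (φR : Fin (N - 1) → ℝ) (hφR : ∀ k, φR k = φC k - (x0 + Ψ) / ((N : ℝ) - 1))
    (ε : ℝ) (hε : ε = M * |x0 + Ψ| / ((N : ℝ) - 1)) :
    |ω ⟨0, by omega⟩ + f (-φR ⟨0, by omega⟩) + f (-∑ j, φR j) - Ω| ≤ ε ∧
    (∀ k : ℕ, (h1 : 1 ≤ k) → (h2 : k ≤ N - 2) →
      |ω ⟨k, by omega⟩ + f (φR ⟨k - 1, by omega⟩) + f (-φR ⟨k, by omega⟩) - Ω| ≤ 2 * ε) ∧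
    |ω ⟨N - 1, by omega⟩ + f (φR ⟨N - 2, by omega⟩) + f (∑ j, φR j) - Ω| ≤ ε := by
  have hN1 : (0:ℝ) < (N:ℝ) - 1 := by
    have : (3:ℝ) ≤ (N:ℝ) := by exact_mod_cast hN
    linarith
  -- Lipschitz bound
  have hlip : ∀ a b : ℝ, |f a - f b| ≤ M * |a - b| := by
    intro a b
    have := Convex.norm_image_sub_le_of_norm_deriv_le
      (fun x _ => (hf.differentiable one_ne_zero).differentiableAt)
      (fun x _ => hM' x) (convex_univ) (Set.mem_univ b) (Set.mem_univ a)
    simpa [Real.norm_eq_abs] using this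
  -- gap bound
  have hgap : ∀ k, |f (φR k) - f (φC k)| ≤ ε ∧ |f (-φR k) - f (-φC k)| ≤ ε := by
    intro k
    have h1 : φR k - φC k = -((x0 + Ψ) / ((N:ℝ) - 1)) := by rw [hφR]; ring
    have habs : |φR k - φC k| = |x0 + Ψ| / ((N:ℝ) - 1) := by
      rw [h1, abs_neg, abs_div, abs_of_pos hN1]
    constructor
    · calc |f (φR k) - f (φC k)| ≤ M * |φR k - φC k| := hlip _ _
        _ = ε := by rw [habs, hε]; ring
    · calc |f (-φR k) - f (-φC k)| ≤ M * |-φR k - -φC k| := hlip _ _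
        _ = ε := by rw [show |-φR k - -φC k| = |φR k - φC k| by rw [← abs_neg]; ring_nf,
            habs, hε]; ring
  -- sum identity
  have hcard : (Finset.univ : Finset (Fin (N-1))).card = N - 1 := by simp
  have hsum : ∑ j, φR j = S - (x0 + Ψ) := by
    have : ∑ j, φR j = ∑ j, φC j - (N - 1 : ℕ) * ((x0 + Ψ) / ((N:ℝ) - 1)) := by
      simp [hφR, Finset.sum_sub_distrib, hcard]
    rw [this, ← hS]
    have hcast : ((N - 1 : ℕ) : ℝ) = (N:ℝ) - 1 := by
      have : 1 ≤ N := by omega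
      push_cast [this]; ring
    rw [hcast]
    field_simp
  have hsum' : ∑ j, φR j = -x0 + (⌊S / (2 * Real.pi)⌋ : ℤ) * (2 * Real.pi) := by
    rw [hsum, hΨ]; ring
  have hfsum : f (∑ j, φR j) = 0 := by
    rw [hsum', (hper.int_mul _) _, hx0']
  have hfsumneg : f (-∑ j, φR j) = 0 := by
    have : -∑ j, φR j = x0 + (-⌊S / (2 * Real.pi)⌋ : ℤ) * (2 * Real.pi) := by
      rw [hsum']; push_cast; ring
    rw [this, (hper.int_mul _) _, hx0]
  refine ⟨?_, ?_, ?_⟩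
  · have h := (hgap ⟨0, by omega⟩).2
    rw [hfsumneg]
    calc |ω ⟨0, by omega⟩ + f (-φR ⟨0, by omega⟩) + 0 - Ω|
        = |f (-φR ⟨0, by omega⟩) - f (-φC ⟨0, by omega⟩)| := by
          rw [hfirst]; ring_nf
      _ ≤ ε := h
  · intro k h1 h2
    have hm := hmid k h1 h2
    have g1 := (hgap ⟨k - 1, by omega⟩).1
    have g2 := (hgap ⟨k, by omega⟩).2
    calc |ω ⟨k, by omega⟩ + f (φR ⟨k - 1, by omega⟩) + f (-φR ⟨k, by omega⟩) - Ω|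
        = |(f (φR ⟨k - 1, by omega⟩) - f (φC ⟨k - 1, by omega⟩)) +
            (f (-φR ⟨k, by omega⟩) - f (-φC ⟨k, by omega⟩))| := by rw [hm]; ring_nf
      _ ≤ _ + _ := abs_add_le _ _
      _ ≤ 2 * ε := by linarith
  · have h := (hgap ⟨N - 2, by omega⟩).1
    rw [hfsum]
    calc |ω ⟨N - 1, by omega⟩ + f (φR ⟨N - 2, by omega⟩) + 0 - Ω|
        = |f (φR ⟨N - 2, by omega⟩) - f (φC ⟨N - 2, by omega⟩)| := by
          rw [hlast]; ring_nf
      _ ≤ ε := h
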